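/- PlanOverWindow correctness: in a deterministic MDP with effective planning window W, the algorithm that, at each timestep i, enumerates all A^W action sequences of length W from the current state, computes the exact W-step cumulative reward of each (via one episode per sequence), and commits to the first action of the maximizing sequence, returns an optimal policy deterministically, using exactly T²·A^W environment timesteps. -/

import Mathlib

open Finset Classical

/-- Total reward of playing a list of actions from state `s` in a deterministic MDP. -/
def seqReturn {S : Type*} (A : ℕ) (f : S → Fin A → S) (R : S → Fin A → ℝ) :
    S → List (Fin A) → ℝ
  | _, [] => 0
  | s, a :: rest => R s a + seqReturn A f R (f s a) rest

/-- State reached after playing a list of actions from `s`. -/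
def stateAfter {S : Type*} (A : ℕ) (f : S → Fin A → S) : S → List (Fin A) → S
  | s, [] => s
  | s, a :: rest => stateAfter A f (f s a) rest

/-- Q-value-iteration iterates: `qIter ... Q1 0 = Q1`, `qIter ... Q1 (j+1) = QVI (qIter ... Q1 j)`,
where `QVI(Q)_t(s,a) = R(s,a) + max_{a'} Q_{t+1}(f(s,a), a')` (and `Q_{T+1} ≡ 0`). -/
noncomputable def qIter {S : Type*} (A T : ℕ) (f : S → Fin A → S) (R : S → Fin A → ℝ)
    (Q1 : ℕ → S → Fin A → ℝ) : ℕ → ℕ → S → Fin A → ℝ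
  | 0 => Q1
  | j + 1 => fun t s a =>
      R s a + if t < T then ⨆ a' : Fin A, qIter A T f R Q1 j (t + 1) (f s a) a' else 0

/-- Trajectory of a deterministic policy: `polState ... t` is the state at timestep `t+1`. -/
def polState {S : Type*} (A : ℕ) (f : S → Fin A → S) (p : ℕ → S → Fin A) (s1 : S) : ℕ → S
  | 0 => s1
  | t + 1 => f (polState A f p s1 t) (p (t + 1) (polState A f p s1 t))

-- helper 1
lemma seqReturn_ofFn_cons {S : Type*} {A : ℕ} (f : S → Fin A → S) (R : S → Fin A → ℝ)
    (s : S) {n : ℕ} (a : Fin A) (c : Fin n → Fin A) :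
    seqReturn A f R s (List.ofFn (Fin.cons a c)) = R s a + seqReturn A f R (f s a) (List.ofFn c) := by
  rw [List.ofFn_succ]
  simp [seqReturn, Fin.cons_succ, Fin.cons_zero]

-- helper 2
lemma take_ofFn_min {α : Type*} {n : ℕ} (v : Fin n → α) (k : ℕ) :
    (List.ofFn v).take k = List.ofFn (Fin.take (min n k) (min_le_left n k) v) := by
  rw [Fin.ofFn_take_eq_take_ofFn]
  rcases le_total n k with h | h
  · rw [min_eq_left h, List.take_of_length_le (by simp [h]), List.take_of_length_le (by simp)]
  · rw [min_eq_right h]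

-- helper 3
lemma stateAfter_append {S : Type*} {A : ℕ} (f : S → Fin A → S) (s : S) (l1 l2 : List (Fin A)) :
    stateAfter A f s (l1 ++ l2) = stateAfter A f (stateAfter A f s l1) l2 := by
  induction l1 generalizing s with
  | nil => simp [stateAfter]
  | cons a t ih => simp [stateAfter, ih]

-- key lemma: qIter equals sup over continuations
lemma qIter_eq_sup {S : Type*} (A T : ℕ) (hA : 0 < A) (f : S → Fin A → S) (R : S → Fin A → ℝ) :
    ∀ (j t : ℕ) (s : S) (a : Fin A), t ≤ T →
      qIter A T f R (fun _ s' a' => R s' a') j t s a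
        = R s a + ⨆ c : Fin (min j (T - t)) → Fin A, seqReturn A f R (f s a) (List.ofFn c) := by
  haveI : Nonempty (Fin A) := ⟨⟨0, hA⟩⟩
  intro j
  induction j with
  | zero =>
    intro t s a _
    simp [qIter, ciSup_unique, seqReturn, List.ofFn_zero]
  | succ j ih =>
    intro t s a ht
    show R s a + _ = _
    by_cases htT : t < T
    · rw [if_pos htT]
      obtain ⟨u, hu⟩ : ∃ u, T - t = u + 1 := ⟨T - t - 1, by omega⟩
      have hu2 : T - (t + 1) = u := by omega
      congr 1
      have hrec : ∀ a' : Fin A, qIter A T f R (fun _ s' a' => R s' a') j (t+1) (f s a) a'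
          = R (f s a) a' + ⨆ c : Fin (min j u) → Fin A,
              seqReturn A f R (f (f s a) a') (List.ofFn c) := by
        intro a'; rw [ih (t+1) (f s a) a' (by omega), hu2]
      rw [hu, Nat.succ_min_succ]
      set s' := f s a
      simp only [hrec]
      apply le_antisymm
      · apply ciSup_le
        intro a'
        obtain ⟨cm, hcm⟩ := Finite.exists_max
          (fun c : Fin (min j u) → Fin A => seqReturn A f R (f s' a') (List.ofFn c))
        calc R s' a' + ⨆ c, seqReturn A f R (f s' a') (List.ofFn c)
            ≤ R s' a' + seqReturn A f R (f s' a') (List.ofFn cm) := by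
              exact add_le_add_right (ciSup_le hcm) _
          _ = seqReturn A f R s' (List.ofFn (Fin.cons a' cm)) := (seqReturn_ofFn_cons f R s' a' cm).symm
          _ ≤ ⨆ c : Fin (min j u + 1) → Fin A, seqReturn A f R s' (List.ofFn c) :=
              le_ciSup (f := fun c : Fin (min j u + 1) → Fin A => seqReturn A f R s' (List.ofFn c))
                (Set.Finite.bddAbove (Set.finite_range _)) _
      · apply ciSup_le
        intro c
        have hc : seqReturn A f R s' (List.ofFn c)
            = R s' (c 0) + seqReturn A f R (f s' (c 0)) (List.ofFn (Fin.tail c)) := by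
          conv_lhs => rw [← Fin.cons_self_tail c]
          exact seqReturn_ofFn_cons f R s' (c 0) (Fin.tail c)
        rw [hc]
        calc R s' (c 0) + seqReturn A f R (f s' (c 0)) (List.ofFn (Fin.tail c))
            ≤ R s' (c 0) + ⨆ c' : Fin (min j u) → Fin A,
                seqReturn A f R (f s' (c 0)) (List.ofFn c') :=
              add_le_add_right (le_ciSup (f := fun c' : Fin (min j u) → Fin A =>
                seqReturn A f R (f s' (c 0)) (List.ofFn c'))
                (Set.Finite.bddAbove (Set.finite_range _)) _) _
          _ ≤ ⨆ a' : Fin A, (R s' a' + ⨆ c' : Fin (min j u) → Fin A,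
                seqReturn A f R (f s' a') (List.ofFn c')) :=
              le_ciSup (f := fun a' : Fin A => R s' a' + ⨆ c' : Fin (min j u) → Fin A,
                seqReturn A f R (f s' a') (List.ofFn c'))
                (Set.Finite.bddAbove (Set.finite_range _)) (c 0)
    · have : t = T := by omega
      subst this
      rw [if_neg htT]
      simp [ciSup_unique, seqReturn, List.ofFn_zero]

-- a version of take_ofFn with explicit size
lemma take_ofFn_eq {α : Type*} {n m k : ℕ} (v : Fin n → α) (h : m = min n k) (hm : m ≤ n) :
    (List.ofFn v).take k = List.ofFn (fun j : Fin m => v (Fin.castLE hm j)) := by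
  subst h
  rw [take_ofFn_min]
  rfl

/--
PlanOverWindow correctness.  Suppose the deterministic MDP has effective
planning window `W` in the sense that every policy greedy with respect to `Q^W`
(where `Q^1_t(s,a) = R(s,a)`, `Q^{j+1} = QVI(Q^j)`) generates an optimal action sequence
from the start state.  Then the algorithm that, at each timestep `i`, enumerates all
length-`W` action sequences from the current state (truncated at the horizon), computes
the exact `W`-step cumulative reward of each, and commits to the first action of a
maximizing sequence, produces an optimal action sequence.  (The algorithm uses exactly
`T` iterations × `A^W` sequences × `T`-step episodes `= T²·A^W` environment timesteps.)
-/
theorem planOverWindow_correct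
    {S : Type*} (A T W : ℕ) (hApos : 0 < A) (hW : 1 ≤ W) (hWT : W ≤ T)
    (f : S → Fin A → S) (R : S → Fin A → ℝ) (s1 : S)
    -- the MDP has effective planning window W: every Q^W-greedy policy is optimal
    (hEPW : ∀ p : ℕ → S → Fin A,
      (∀ t s a, 1 ≤ t → t ≤ T →
          qIter A T f R (fun _ s' a' => R s' a') (W - 1) t s a
            ≤ qIter A T f R (fun _ s' a' => R s' a') (W - 1) t s (p t s)) →
      ∀ acts' : Fin T → Fin A,
        seqReturn A f R s1 (List.ofFn acts')
          ≤ seqReturn A f R s1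
              (List.ofFn (fun i : Fin T => p (i + 1) (polState A f p s1 i)))) :
    -- any trajectory produced by W-step lookahead greedy choices is optimal
    ∀ acts : Fin T → Fin A,
      (∀ i : Fin T, ∃ seq : Fin W → Fin A,
        acts i = seq ⟨0, hW⟩ ∧
        ∀ seq' : Fin W → Fin A,
          seqReturn A f R (stateAfter A f s1 ((List.ofFn acts).take i))
              ((List.ofFn seq').take (T - i))
            ≤ seqReturn A f R (stateAfter A f s1 ((List.ofFn acts).take i))
              ((List.ofFn seq).take (T - i))) →
      ∀ acts' : Fin T → Fin A,
        seqReturn A f R s1 (List.ofFn acts') ≤ seqReturn A f R s1 (List.ofFn acts) := by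
  classical
  intro acts hacts acts'
  haveI : Nonempty (Fin A) := ⟨⟨0, hApos⟩⟩
  obtain ⟨W', rfl⟩ : ∃ W2, W = W2 + 1 := ⟨W - 1, by omega⟩
  simp only [Nat.add_sub_cancel] at hEPW
  set Q : ℕ → S → Fin A → ℝ := qIter A T f R (fun _ s' a' => R s' a') W' with hQ
  set st : ℕ → S := fun k => stateAfter A f s1 ((List.ofFn acts).take k) with hst
  -- greediness of acts along its own trajectory
  have hgreedy : ∀ i : Fin T, ∀ a : Fin A,
      Q ((i : ℕ) + 1) (st i) a ≤ Q ((i : ℕ) + 1) (st i) (acts i) := by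
    intro i a
    obtain ⟨seq, hseq0, hmax⟩ := hacts i
    have hiT : (i : ℕ) < T := i.isLt
    obtain ⟨u, hu⟩ : ∃ u, T - (i : ℕ) = u + 1 := ⟨T - i - 1, by omega⟩
    have hu2 : T - ((i : ℕ) + 1) = u := by omega
    set m0 := min W' u with hm0
    have hmin : m0 + 1 = min (W' + 1) (T - (i : ℕ)) := by omega
    have hle : m0 + 1 ≤ W' + 1 := by omega
    have htake : ∀ sq : Fin (W' + 1) → Fin A,
        (List.ofFn sq).take (T - (i : ℕ))
          = List.ofFn (fun j : Fin (m0 + 1) => sq (Fin.castLE hle j)) :=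
      fun sq => take_ofFn_eq sq hmin hle
    have Qval : ∀ b : Fin A, Q ((i : ℕ) + 1) (st i) b
        = R (st i) b + ⨆ c : Fin m0 → Fin A, seqReturn A f R (f (st i) b) (List.ofFn c) := by
      intro b
      rw [hQ, qIter_eq_sup A T hApos f R W' ((i : ℕ) + 1) (st i) b (by omega), hu2, hm0]
    -- key1 : the lookahead value of the chosen sequence is at most Q of its first action
    have key1 : seqReturn A f R (st i) ((List.ofFn seq).take (T - (i : ℕ)))
        ≤ Q ((i : ℕ) + 1) (st i) (acts i) := by
      rw [htake seq, Qval (acts i)]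
      set d : Fin (m0 + 1) → Fin A := fun j => seq (Fin.castLE hle j) with hd
      have hd0 : d 0 = acts i := by
        rw [hseq0]
        show seq (Fin.castLE hle 0) = seq ⟨0, hW⟩
        exact congrArg seq (Fin.ext (by simp))
      conv_lhs => rw [← Fin.cons_self_tail d, seqReturn_ofFn_cons]
      rw [hd0]
      exact add_le_add_right (le_ciSup
        (f := fun c : Fin m0 → Fin A => seqReturn A f R (f (st i) (acts i)) (List.ofFn c))
        (Set.Finite.bddAbove (Set.finite_range _)) (Fin.tail d)) _
    -- key2 : Q of any action is at most the best lookahead value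
    have key2 : Q ((i : ℕ) + 1) (st i) a
        ≤ seqReturn A f R (st i) ((List.ofFn seq).take (T - (i : ℕ))) := by
      rw [Qval a]
      obtain ⟨cm, hcm⟩ := Finite.exists_max
        (fun c : Fin m0 → Fin A => seqReturn A f R (f (st i) a) (List.ofFn c))
      set sq : Fin (W' + 1) → Fin A :=
        fun j => if h : (j : ℕ) < m0 + 1 then Fin.cons (α := fun _ => Fin A) a cm ⟨j, h⟩ else a
        with hsq
      have h2 : (List.ofFn sq).take (T - (i : ℕ)) = List.ofFn (Fin.cons a cm) := by
        rw [htake sq]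
        congr 1
        funext j
        have hj : ((Fin.castLE hle j : Fin (W' + 1)) : ℕ) < m0 + 1 := j.isLt
        show (if h : ((Fin.castLE hle j : Fin (W' + 1)) : ℕ) < m0 + 1 then
            Fin.cons (α := fun _ => Fin A) a cm ⟨((Fin.castLE hle j : Fin (W' + 1)) : ℕ), h⟩
            else a) = Fin.cons (α := fun _ => Fin A) a cm j
        rw [dif_pos hj]
        congr 1
      calc R (st i) a + ⨆ c : Fin m0 → Fin A, seqReturn A f R (f (st i) a) (List.ofFn c)
          ≤ R (st i) a + seqReturn A f R (f (st i) a) (List.ofFn cm) :=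
            add_le_add_right (ciSup_le hcm) _
        _ = seqReturn A f R (st i) (List.ofFn (Fin.cons a cm)) :=
            (seqReturn_ofFn_cons f R (st i) a cm).symm
        _ = seqReturn A f R (st i) ((List.ofFn sq).take (T - (i : ℕ))) := by rw [h2]
        _ ≤ _ := hmax sq
    exact le_trans key2 key1
  -- the greedy policy
  set p : ℕ → S → Fin A := fun t s =>
    if h : ∃ i : Fin T, (i : ℕ) + 1 = t ∧ s = st i then acts h.choose
    else Classical.choose (Finite.exists_max (fun a : Fin A => Q t s a)) with hp
  have hgreedy' : ∀ t s a, 1 ≤ t → t ≤ T → Q t s a ≤ Q t s (p t s) := by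
    intro t s a h1 h2
    by_cases h : ∃ i : Fin T, (i : ℕ) + 1 = t ∧ s = st i
    · rw [hp]; dsimp only; rw [dif_pos h]
      obtain ⟨i0, hi1, hi2⟩ := id h
      have hc := h.choose_spec
      have hch : h.choose = i0 := Fin.ext (by omega)
      rw [hch, hi2, ← hi1]
      exact hgreedy i0 a
    · rw [hp]; dsimp only; rw [dif_neg h]
      exact Classical.choose_spec (Finite.exists_max (fun a : Fin A => Q t s a)) a
  have hpk : ∀ k (hk : k < T), p (k + 1) (st k) = acts ⟨k, hk⟩ := by
    intro k hk
    have hcond : ∃ i : Fin T, (i : ℕ) + 1 = k + 1 ∧ st k = st i := ⟨⟨k, hk⟩, rfl, rfl⟩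
    have hchoose : hcond.choose = ⟨k, hk⟩ := by
      have h6 := hcond.choose_spec.1
      have h5 : (hcond.choose : ℕ) = k := by omega
      exact Fin.ext (by rw [h5])
    rw [hp]; dsimp only; rw [dif_pos hcond, hchoose]
  have traj : ∀ k : ℕ, k ≤ T → polState A f p s1 k = st k := by
    intro k
    induction k with
    | zero => intro _; rfl
    | succ k ih =>
      intro hk
      have hkT : k < T := hk
      have hpol : polState A f p s1 (k + 1) = f (st k) (p (k + 1) (st k)) := by
        show f (polState A f p s1 k) (p (k + 1) (polState A f p s1 k)) = _
        rw [ih (by omega)]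
      rw [hpol, hpk k hkT, hst]
      show f (stateAfter A f s1 ((List.ofFn acts).take k)) _
        = stateAfter A f s1 ((List.ofFn acts).take (k + 1))
      have hget : (List.ofFn acts)[k]? = some (acts ⟨k, hkT⟩) := by
        rw [List.getElem?_eq_getElem (by simp [hkT])]; simp
      rw [List.take_succ, hget, stateAfter_append]
      rfl
  have hlist : (List.ofFn fun i : Fin T => p ((i : ℕ) + 1) (polState A f p s1 i))
      = List.ofFn acts := by
    congr 1
    funext i
    rw [traj i (le_of_lt i.isLt), hpk i i.isLt]
  have := hEPW p hgreedy' acts'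
  rwa [hlist] at this
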